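/- Let k ∈ ℕ₀. (i) There exists a constant C¹_k > 0 such that |∂_a^k (1+G(r,a))^{−1}| ≤ C¹_k r^{2k} for all 0 ≤ r ≤ 1/3 and all 0 ≤ a ≤ 1. (ii) There exists a constant C²_k ≠ 0 such that ∂_a^k (1+G(r,a))^{−1} evaluated at a = 0 equals C²_k r^{2k} for all r ≥ 0. The constants C¹_k and C²_k are independent of r and a. -/

import Mathlib

/-- Evaluation of a list of terms `(c, i, j) ↦ c * (y^i)⁻¹ * ((1+y)^j)⁻¹`. -/
noncomputable def eL (l : List (ℝ × ℕ × ℕ)) (y : ℝ) : ℝ :=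
  (l.map (fun p => p.1 * (y ^ p.2.1)⁻¹ * ((1 + y) ^ p.2.2)⁻¹)).sum

/-- The effect of `y ↦ -2 * (d/dy) / y` on such a list of terms. -/
def stepL (l : List (ℝ × ℕ × ℕ)) : List (ℝ × ℕ × ℕ) :=
  l.flatMap (fun p => [(2 * p.1 * p.2.1, p.2.1 + 2, p.2.2), (2 * p.1 * p.2.2, p.2.1 + 1, p.2.2 + 1)])

/-- Lists representing the iterated derivatives. -/
noncomputable def LL : ℕ → List (ℝ × ℕ × ℕ)
  | 0 => [(1, 0, 1)]
  | (k + 1) => stepL (LL k)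

lemma eL_cons (p : ℝ × ℕ × ℕ) (l : List (ℝ × ℕ × ℕ)) (y : ℝ) :
    eL (p :: l) y = p.1 * (y ^ p.2.1)⁻¹ * ((1 + y) ^ p.2.2)⁻¹ + eL l y := by
  simp [eL]

lemma stepL_cons (p : ℝ × ℕ × ℕ) (l : List (ℝ × ℕ × ℕ)) :
    stepL (p :: l) = (2 * p.1 * p.2.1, p.2.1 + 2, p.2.2) ::
      (2 * p.1 * p.2.2, p.2.1 + 1, p.2.2 + 1) :: stepL l := by
  simp [stepL]

lemma hasDerivAt_eL (l : List (ℝ × ℕ × ℕ)) {y : ℝ} (hy : 0 < y) :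
    HasDerivAt (fun y' => eL l y') (-(y / 2) * eL (stepL l) y) y := by
  induction l with
  | nil => simpa [eL, stepL] using hasDerivAt_const y (0 : ℝ)
  | cons p l ih =>
    obtain ⟨c, i, j⟩ := p
    have hy1 : (0:ℝ) < 1 + y := by linarith
    have h1 : HasDerivAt (fun y' : ℝ => (y' ^ i)⁻¹)
        (-(↑i * y ^ (i - 1)) / (y ^ i) ^ 2) y :=
      (hasDerivAt_pow i y).inv (pow_ne_zero _ hy.ne')
    have h2 : HasDerivAt (fun y' : ℝ => ((1 + y') ^ j)⁻¹)
        (-(↑j * (1 + y) ^ (j - 1) * 1) / ((1 + y) ^ j) ^ 2) y :=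
      (((hasDerivAt_id y).const_add 1).pow j).inv (pow_ne_zero _ hy1.ne')
    have hterm := ((h1.const_mul c).mul h2).add ih
    have heq : (fun y' => eL ((c, i, j) :: l) y')
        = fun y' => c * (y' ^ i)⁻¹ * ((1 + y') ^ j)⁻¹ + eL l y' := by
      funext y'; simp [eL_cons]
    rw [heq]
    refine hterm.congr_deriv ?_
    symm
    rw [stepL_cons, eL_cons, eL_cons]
    simp only []
    rcases i with _ | i <;> rcases j with _ | j <;>
      simp only [Nat.add_sub_cancel, pow_zero] <;>
      field_simp <;> ring

lemma hasDerivAt_comp (l : List (ℝ × ℕ × ℕ)) (r a : ℝ) (h : 0 < 1 - 4 * a * r ^ 2) :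
    HasDerivAt (fun a' => eL l (Real.sqrt (1 - 4 * a' * r ^ 2)))
      (r ^ 2 * eL (stepL l) (Real.sqrt (1 - 4 * a * r ^ 2))) a := by
  set y := Real.sqrt (1 - 4 * a * r ^ 2) with hydef
  have hy : 0 < y := Real.sqrt_pos.mpr h
  have hin : HasDerivAt (fun a' : ℝ => 1 - 4 * a' * r ^ 2) (-(4 * 1 * r ^ 2)) a :=
    (((hasDerivAt_id a).const_mul 4).mul_const (r ^ 2)).const_sub 1
  have hs : HasDerivAt Real.sqrt (1 / (2 * y)) (1 - 4 * a * r ^ 2) :=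
    Real.hasDerivAt_sqrt h.ne'
  have hphi : HasDerivAt (fun a' => Real.sqrt (1 - 4 * a' * r ^ 2))
      (1 / (2 * y) * -(4 * 1 * r ^ 2)) a := hs.comp a hin
  have := (hasDerivAt_eL l hy).comp a hphi
  refine this.congr_deriv ?_
  symm
  field_simp
  ring

lemma main_formula (k : ℕ) : ∀ r a : ℝ, 4 * a * r ^ 2 < 1 →
    iteratedDeriv k (fun a' : ℝ => (1 + Real.sqrt (1 - 4 * a' * r ^ 2))⁻¹) a
      = eL (LL k) (Real.sqrt (1 - 4 * a * r ^ 2)) * r ^ (2 * k) := by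
  induction k with
  | zero =>
    intro r a h
    simp [iteratedDeriv_zero, LL, eL]
  | succ k ih =>
    intro r a h
    have hS : IsOpen {a' : ℝ | 4 * a' * r ^ 2 < 1} :=
      isOpen_lt (by fun_prop) continuous_const
    rw [iteratedDeriv_succ]
    have hev : (iteratedDeriv k fun a' : ℝ => (1 + Real.sqrt (1 - 4 * a' * r ^ 2))⁻¹)
        =ᶠ[nhds a] fun a' => eL (LL k) (Real.sqrt (1 - 4 * a' * r ^ 2)) * r ^ (2 * k) := by
      filter_upwards [hS.mem_nhds h] with b hb using ih r b hb
    rw [hev.deriv_eq]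
    have h' : 0 < 1 - 4 * a * r ^ 2 := by linarith
    rw [((hasDerivAt_comp (LL k) r a h').mul_const (r ^ (2 * k))).deriv]
    show r ^ 2 * eL (stepL (LL k)) _ * r ^ (2 * k) = eL (LL (k + 1)) _ * r ^ (2 * (k + 1))
    rw [show LL (k + 1) = stepL (LL k) from rfl]
    ring

lemma LL_inv (k : ℕ) : ∀ p ∈ LL k, 0 ≤ p.1 ∧ 1 ≤ p.2.2 := by
  induction k with
  | zero => simp [LL]
  | succ k ih =>
    intro p hp
    rw [show LL (k + 1) = stepL (LL k) from rfl, stepL] at hp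
    rw [List.mem_flatMap] at hp
    obtain ⟨q, hq, hpq⟩ := hp
    obtain ⟨h1, h2⟩ := ih q hq
    simp only [List.mem_cons, List.mem_singleton, List.not_mem_nil, or_false] at hpq
    rcases hpq with rfl | rfl
    · exact ⟨mul_nonneg (mul_nonneg (by norm_num) h1) (Nat.cast_nonneg _), h2⟩
    · exact ⟨mul_nonneg (mul_nonneg (by norm_num) h1) (Nat.cast_nonneg _),
        le_trans h2 (Nat.le_succ _)⟩

lemma eL_nonneg (l : List (ℝ × ℕ × ℕ)) (hl : ∀ p ∈ l, 0 ≤ p.1) {y : ℝ} (hy : 0 < y) :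
    0 ≤ eL l y := by
  induction l with
  | nil => simp [eL]
  | cons p l ih =>
    rw [eL_cons]
    have hp := hl p List.mem_cons_self
    have : 0 ≤ eL l y := ih (fun q hq => hl q (List.mem_cons_of_mem p hq))
    have h1 : (0:ℝ) < 1 + y := by linarith
    positivity

lemma eL_le (l : List (ℝ × ℕ × ℕ)) (hl : ∀ p ∈ l, 0 ≤ p.1) {y : ℝ} (hy : 1 / 2 ≤ y) :
    eL l y ≤ (l.map (fun p => p.1 * 2 ^ p.2.1)).sum := by
  induction l with
  | nil => simp [eL]
  | cons p l ih =>
    rw [eL_cons, List.map_cons, List.sum_cons]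
    have hp := hl p List.mem_cons_self
    have h2 := ih (fun q hq => hl q (List.mem_cons_of_mem p hq))
    have hy0 : (0:ℝ) < y := by linarith
    have ha : (2:ℝ)⁻¹ ^ p.2.1 ≤ y ^ p.2.1 :=
      pow_le_pow_left₀ (by norm_num) (by linarith) _
    have hb1 : (y ^ p.2.1)⁻¹ ≤ 2 ^ p.2.1 := by
      calc (y ^ p.2.1)⁻¹ ≤ ((2:ℝ)⁻¹ ^ p.2.1)⁻¹ := by
            apply inv_anti₀ (by positivity) ha
        _ = 2 ^ p.2.1 := by rw [← inv_pow, inv_inv]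
    have hb2 : ((1 + y) ^ p.2.2)⁻¹ ≤ 1 :=
      inv_le_one_of_one_le₀ (one_le_pow₀ (by linarith))
    calc p.1 * (y ^ p.2.1)⁻¹ * ((1 + y) ^ p.2.2)⁻¹ + eL l y
        ≤ p.1 * 2 ^ p.2.1 * 1 + (l.map (fun p => p.1 * 2 ^ p.2.1)).sum := by
          gcongr
        _ = p.1 * 2 ^ p.2.1 + (l.map (fun p => p.1 * 2 ^ p.2.1)).sum := by ring

lemma eL_one_mono (l : List (ℝ × ℕ × ℕ)) (hl : ∀ p ∈ l, 0 ≤ p.1 ∧ 1 ≤ p.2.2) :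
    eL l 1 ≤ eL (stepL l) 1 := by
  induction l with
  | nil => simp [eL, stepL]
  | cons p l ih =>
    rw [stepL_cons, eL_cons, eL_cons, eL_cons]
    obtain ⟨h1, h2⟩ := hl p List.mem_cons_self
    have h3 := ih (fun q hq => hl q (List.mem_cons_of_mem p hq))
    have hj : (1:ℝ) ≤ (p.2.2 : ℝ) := by exact_mod_cast h2
    have hi : (0:ℝ) ≤ (p.2.1 : ℝ) := Nat.cast_nonneg _
    have key : p.1 * ((1:ℝ) ^ p.2.1)⁻¹ * ((1 + 1) ^ p.2.2)⁻¹
        ≤ 2 * p.1 * p.2.1 * ((1:ℝ) ^ (p.2.1 + 2))⁻¹ * ((1 + 1) ^ p.2.2)⁻¹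
          + 2 * p.1 * p.2.2 * ((1:ℝ) ^ (p.2.1 + 1))⁻¹ * ((1 + 1) ^ (p.2.2 + 1))⁻¹ := by
      simp only [one_pow, inv_one, mul_one, one_mul]
      have hpow : ((1:ℝ) + 1) ^ (p.2.2 + 1) = 2 * (1 + 1) ^ p.2.2 := by
        rw [pow_succ]; ring
      rw [hpow]
      have hpos : (0:ℝ) < (1 + 1 : ℝ) ^ p.2.2 := by positivity
      rw [mul_inv, ← mul_assoc]
      have e1 : 2 * p.1 * (p.2.2:ℝ) * 2⁻¹ = p.1 * p.2.2 := by ring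
      nlinarith [mul_nonneg (mul_nonneg (by norm_num : (0:ℝ) ≤ 2) h1) hi,
        inv_nonneg.mpr hpos.le, mul_nonneg h1 (by linarith : (0:ℝ) ≤ (p.2.2:ℝ) - 1)]
    linarith

lemma eL_one_pos (k : ℕ) : 0 < eL (LL k) 1 := by
  induction k with
  | zero => norm_num [LL, eL]
  | succ k ih => exact lt_of_lt_of_le ih (eL_one_mono _ (LL_inv k))

/-- Estimates and exact form of the `k`-th derivative in `a` of
`a ↦ (1+√(1−4ar²))⁻¹`. -/
theorem stmt_12 (k : ℕ) :
    (∃ C : ℝ, 0 < C ∧ ∀ r ∈ Set.Icc (0:ℝ) (1/3), ∀ a ∈ Set.Icc (0:ℝ) 1,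
      |iteratedDeriv k (fun a' : ℝ => (1 + Real.sqrt (1 - 4 * a' * r ^ 2))⁻¹) a|
        ≤ C * r ^ (2 * k)) ∧
    (∃ C : ℝ, C ≠ 0 ∧ ∀ r : ℝ, 0 ≤ r →
      iteratedDeriv k (fun a' : ℝ => (1 + Real.sqrt (1 - 4 * a' * r ^ 2))⁻¹) 0
        = C * r ^ (2 * k)) := by
  constructor
  · refine ⟨((LL k).map (fun p => p.1 * 2 ^ p.2.1)).sum + 1, ?_, ?_⟩
    · have hB : 0 ≤ ((LL k).map (fun p => p.1 * 2 ^ p.2.1)).sum := by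
        apply List.sum_nonneg
        intro x hx
        obtain ⟨p, hp, rfl⟩ := List.mem_map.mp hx
        have := (LL_inv k p hp).1
        positivity
      linarith
    · rintro r ⟨hr0, hr1⟩ a ⟨ha0, ha1⟩
      have hr2 : r ^ 2 ≤ 1 / 9 := by nlinarith
      have h4 : 4 * a * r ^ 2 ≤ 4 / 9 := by nlinarith
      have h : 4 * a * r ^ 2 < 1 := by linarith
      rw [main_formula k r a h]
      have hy : 1 / 2 ≤ Real.sqrt (1 - 4 * a * r ^ 2) := by
        rw [Real.le_sqrt' (by norm_num)]
        nlinarith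
      have hypos : 0 < Real.sqrt (1 - 4 * a * r ^ 2) := by linarith
      have hnn : 0 ≤ eL (LL k) (Real.sqrt (1 - 4 * a * r ^ 2)) :=
        eL_nonneg _ (fun p hp => (LL_inv k p hp).1) hypos
      have hrk : (0:ℝ) ≤ r ^ (2 * k) := by positivity
      rw [abs_of_nonneg (mul_nonneg hnn hrk)]
      have hle := eL_le (LL k) (fun p hp => (LL_inv k p hp).1) hy
      nlinarith
  · refine ⟨eL (LL k) 1, (eL_one_pos k).ne', ?_⟩
    intro r hr
    have h : 4 * 0 * r ^ 2 < 1 := by norm_num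
    rw [main_formula k r 0 h]
    norm_num
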